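/- Let n ≥ 2 be an integer, let ι be a finite type (a finite index set), and let e : ι → ι be an involution (e ∘ e = id). Consider the free abelian group P = ι →₀ ℤ (finitely supported functions from ι to ℤ), on which the nontrivial element of ℤ/2 acts by permuting the basis via e (i.e. by x ↦ x ∘ mapping of indices through e). Suppose φ : P → ℤ/2^n is a surjective additive group homomorphism which is equivariant for the ℤ/2-action on P via e and the action on ℤ/2^n by negation, i.e. φ(e·x) = −φ(x) for all x ∈ P, where e·x denotes the image of x under the permutation of coordinates induced by e. Then the cardinality of ι is at least 2. -/
import Mathlib


/-- key claim of Example 5.11, due to F. Scavia: Let `n ≥ 2`, `ι` a finite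
index set and `e : ι → ι` an involution. If `φ : (ι →₀ ℤ) → ℤ/2^n` is a surjective additive
homomorphism from the permutation module `P = ι →₀ ℤ` (with `ℤ/2` acting via `e`) which is
equivariant for the negation action on `ℤ/2^n` (i.e. `φ(e·x) = -φ(x)`), then `card ι ≥ 2`. -/
theorem stmt10 (n : ℕ) (hn : 2 ≤ n) (ι : Type*) [Fintype ι] (e : ι → ι)
    (he : Function.Involutive e)
    (φ : (ι →₀ ℤ) →+ ZMod (2 ^ n)) (hsurj : Function.Surjective φ)
    (hequiv : ∀ x : ι →₀ ℤ, φ (Finsupp.mapDomain e x) = - φ x) :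
    2 ≤ Fintype.card ι := by
  by_contra h
  push_neg at h
  have hsub : Subsingleton ι := by
    rw [← Fintype.card_le_one_iff_subsingleton]
    omega
  have heid : e = id := funext fun i => Subsingleton.elim _ _
  obtain ⟨x, hx⟩ := hsurj 1
  have h2 : (1 : ZMod (2 ^ n)) = -1 := by
    have := hequiv x
    rwa [heid, Finsupp.mapDomain_id, hx] at this
  have h20 : ((2 : ℕ) : ZMod (2 ^ n)) = 0 := by
    push_cast
    linear_combination h2
  haveI : NeZero (2 ^ n) := ⟨by positivity⟩
  rw [ZMod.natCast_eq_zero_iff] at h20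
  have := Nat.le_of_dvd (by norm_num) h20
  have : 4 ≤ 2 ^ n := by
    calc 4 = 2 ^ 2 := rfl
    _ ≤ 2 ^ n := Nat.pow_le_pow_right (by norm_num) hn
  omega
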